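/- Let G be a finite group and let N ≅ Z_{p^{α₁}} × Z_{p^{α₂}} be a non-trivial normal abelian subgroup of G with 1 ≤ α₁ ≤ α₂ and p prime, such that G/N has prime order. Then sd(G) ≥ g(p, α₁, α₂) / (2 · |L(G)|²), where g(p, α₁, α₂) = (1/(p − 1)⁴) · [ (α₂ − α₁ + 1)p^{α₁+2} − (α₂ − α₁ − 1)p^{α₁+1} − (α₁ + α₂ + 3)p + (α₁ + α₂ + 1) ]² + 4. -/

import Mathlib

open scoped Pointwise

/-- Two subgroups `X`, `Y` permute if `XY = YX` as sets. -/
def Permutes {G : Type*} [Group G] (X Y : Subgroup G) : Prop :=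
  (X : Set G) * (Y : Set G) = (Y : Set G) * (X : Set G)

/-- A subgroup `H` of `G` is subnormal if there is a finite chain
`H = H₀ ⊴ H₁ ⊴ … ⊴ Hₙ = G` with each term normal in the next. -/
def Subnormal {G : Type*} [Group G] (H : Subgroup G) : Prop :=
  ∃ n : ℕ, ∃ c : ℕ → Subgroup G, c 0 = H ∧ c n = ⊤ ∧
    ∀ i < n, c i ≤ c (i + 1) ∧ ((c i).subgroupOf (c (i + 1))).Normal

/-- The subgroup S-commutativity degree
`spd(G) = |{(X,Y) ∈ sn(G) × M(G) : XY = YX}| / (|sn(G)|·|M(G)|)`;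
maximal subgroups of `G` are exactly the coatoms of its subgroup lattice. -/
noncomputable def spd (G : Type*) [Group G] : ℝ :=
  (Nat.card {q : Subgroup G × Subgroup G //
      Subnormal q.1 ∧ IsCoatom q.2 ∧ Permutes q.1 q.2} : ℝ) /
    ((Nat.card {H : Subgroup G // Subnormal H} : ℝ) *
      (Nat.card {H : Subgroup G // IsCoatom H} : ℝ))

/-- The subgroup commutativity degree
`sd(G) = |{(X,Y) ∈ L(G)² : XY = YX}| / |L(G)|²`. -/
noncomputable def sd (G : Type*) [Group G] : ℝ :=
  (Nat.card {q : Subgroup G × Subgroup G // Permutes q.1 q.2} : ℝ) /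
    (Nat.card (Subgroup G) : ℝ) ^ 2


section Aux
open Finset AddSubgroup

def Tfin (p a b : ℕ) : Finset ((ℕ × ℕ) × ℕ) :=
  ((Finset.range (a+1)) ×ˢ (Finset.range (b+1))) ×ˢ (Finset.range (p^b)) |>.filter
    (fun t => t.2 < p ^ t.1.2 ∧ p ^ (t.1.2 + t.1.1 - a) ∣ t.2)

lemma card_multiples_range (m k : ℕ) (hk : 0 < k) :
    ((Finset.range (m * k)).filter (fun s => k ∣ s)).card = m := by
  have : (Finset.range (m * k)).filter (fun s => k ∣ s)
      = (Finset.range m).image (fun j => j * k) := by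
    ext s
    simp only [mem_filter, mem_range, mem_image]
    constructor
    · rintro ⟨hlt, j, rfl⟩
      rw [mul_comm k j] at hlt ⊢
      exact ⟨j, (Nat.mul_lt_mul_right hk).1 hlt, rfl⟩
    · rintro ⟨j, hj, rfl⟩
      exact ⟨(Nat.mul_lt_mul_right hk).2 hj, dvd_mul_left k j⟩
  rw [this, Finset.card_image_of_injective _ (fun x y h => Nat.eq_of_mul_eq_mul_right hk h),
    Finset.card_range]

lemma Tfin_card (p a b : ℕ) (hp : 2 ≤ p) (hab : a ≤ b) :
    (Tfin p a b).card = ∑ c ∈ range (a+1), ∑ d ∈ range (b+1), p ^ (min d (a - c)) := by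
  have hp0 : 0 < p := by omega
  rw [Tfin, Finset.card_filter, Finset.sum_product, Finset.sum_product]
  refine Finset.sum_congr rfl (fun c hc => Finset.sum_congr rfl (fun d hd => ?_))
  rw [mem_range] at hc hd
  have hd' : d ≤ b := by omega
  have hc' : c ≤ a := by omega
  have h1 : ∑ s ∈ range (p ^ b), (if s < p ^ d ∧ p ^ (d + c - a) ∣ s then 1 else 0)
      = ((range (p ^ d)).filter (fun s => p ^ (d + c - a) ∣ s)).card := by
    rw [Finset.card_filter]
    rw [← Finset.sum_filter_add_sum_filter_not (range (p ^ b)) (fun s => s < p ^ d)]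
    have hle : p ^ d ≤ p ^ b := Nat.pow_le_pow_right hp0 hd'
    have e1 : (range (p ^ b)).filter (fun s => s < p ^ d) = range (p ^ d) := by
      ext s; simp only [mem_filter, mem_range]; omega
    rw [e1]
    have e2 : ∀ s ∈ (range (p ^ b)).filter (fun s => ¬ s < p ^ d),
        (if s < p ^ d ∧ p ^ (d + c - a) ∣ s then 1 else 0) = 0 := by
      intro s hs; rw [mem_filter] at hs; simp [hs.2]
    rw [Finset.sum_congr rfl e2, Finset.sum_const_zero, add_zero]
    refine Finset.sum_congr rfl (fun s hs => ?_)
    rw [mem_range] at hs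
    simp [hs]
  rw [h1]
  have hexp : p ^ d = p ^ (min d (a - c)) * p ^ (d + c - a) := by
    rw [← pow_add]; congr 1; omega
  rw [hexp, card_multiples_range _ _ (pow_pos hp0 _)]

lemma sum_min_eq (p e b : ℕ) (hp : 2 ≤ p) (h : e ≤ b) :
    ∑ d ∈ range (b+1), (p:ℝ) ^ (min d e) =
      (∑ d ∈ range e, (p:ℝ) ^ d) + ((b:ℝ) - e + 1) * (p:ℝ) ^ e := by
  induction b, h using Nat.le_induction with
  | base =>
    rw [Finset.sum_range_succ]
    have : ∀ d ∈ range e, (p:ℝ) ^ (min d e) = (p:ℝ) ^ d := by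
      intro d hd; rw [mem_range] at hd; rw [min_eq_left hd.le]
    rw [Finset.sum_congr rfl this, min_self]
    ring
  | succ b hb ih =>
    rw [Finset.sum_range_succ, ih, min_eq_right (by omega)]
    push_cast
    ring

lemma main_identity (p a b : ℕ) (hp : 2 ≤ p) (hab : a ≤ b) :
    ((p:ℝ) - 1) ^ 2 * ∑ e ∈ range (a+1), ∑ d ∈ range (b+1), (p:ℝ) ^ (min d e) =
      ((b:ℝ) - a + 1) * (p:ℝ) ^ (a + 2) - ((b:ℝ) - a - 1) * (p:ℝ) ^ (a + 1)
        - ((a:ℝ) + b + 3) * p + ((a:ℝ) + b + 1) := by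
  have hp1 : (p:ℝ) ≠ 1 := by
    have : (2:ℝ) ≤ p := by exact_mod_cast hp
    linarith
  have hp1' : (p:ℝ) - 1 ≠ 0 := by
    intro h; apply hp1; linarith
  induction a with
  | zero =>
    rw [Finset.sum_range_one, sum_min_eq p 0 b hp (by omega)]
    simp only [Finset.range_zero, Finset.sum_empty, pow_zero]
    push_cast
    ring
  | succ a ih =>
    have hab' : a ≤ b := by omega
    rw [Finset.sum_range_succ, mul_add, ih hab', sum_min_eq p (a+1) b hp hab,
      geom_sum_eq hp1]
    push_cast
    field_simp
    ring

section
variable (p a b : ℕ)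

/-- the subgroup attached to a triple (c,d,s) -/
def Ksub (c d s : ℕ) : AddSubgroup (ZMod (p^a) × ZMod (p^b)) :=
  AddSubgroup.closure {(((p^c : ℕ) : ZMod (p^a)), ((s : ℕ) : ZMod (p^b))),
    (0, ((p^d : ℕ) : ZMod (p^b)))}

lemma mem_Ksub {c d s : ℕ} {x : ZMod (p^a) × ZMod (p^b)} :
    x ∈ Ksub p a b c d s ↔ ∃ m n : ℤ,
      m • (((p^c : ℕ) : ZMod (p^a)), ((s : ℕ) : ZMod (p^b)))
        + n • ((0 : ZMod (p^a)), ((p^d : ℕ) : ZMod (p^b))) = x :=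
  AddSubgroup.mem_closure_pair

lemma Ksub_map_fst (c d s : ℕ) :
    (Ksub p a b c d s).map (AddMonoidHom.fst _ _) = zmultiples ((p^c : ℕ) : ZMod (p^a)) := by
  ext x
  simp only [AddSubgroup.mem_map, mem_Ksub, mem_zmultiples_iff]
  constructor
  · rintro ⟨y, ⟨m, n, rfl⟩, rfl⟩
    exact ⟨m, by simp⟩
  · rintro ⟨m, rfl⟩
    exact ⟨_, ⟨m, 0, rfl⟩, by simp⟩

end

section
variable (p a b : ℕ)

lemma gen2_mem_Ksub (c d s : ℕ) :
    ((0 : ZMod (p^a)), ((p^d : ℕ) : ZMod (p^b))) ∈ Ksub p a b c d s :=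
  (mem_Ksub p a b).2 ⟨0, 1, by simp⟩

lemma gen1_mem_Ksub (c d s : ℕ) :
    (((p^c : ℕ) : ZMod (p^a)), ((s : ℕ) : ZMod (p^b))) ∈ Ksub p a b c d s :=
  (mem_Ksub p a b).2 ⟨1, 0, by simp⟩

lemma card_zmult (n k : ℕ) (hp : 2 ≤ p) (hk : k ≤ n) :
    Nat.card (zmultiples ((p^k : ℕ) : ZMod (p^n))) = p^(n-k) := by
  rw [Nat.card_zmultiples, ZMod.addOrderOf_coe _ (pow_ne_zero n (by omega : p ≠ 0)),
    Nat.gcd_eq_right (pow_dvd_pow p hk), Nat.pow_div hk (by omega)]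

lemma Ksub_snd_slice (hp : 2 ≤ p) {c d s : ℕ} (hc : c ≤ a) (hd : d ≤ b)
    (hdvd : p^(d+c-a) ∣ s) :
    ∀ y : ZMod (p^b), ((0 : ZMod (p^a)), y) ∈ Ksub p a b c d s →
      y ∈ zmultiples ((p^d : ℕ) : ZMod (p^b)) := by
  intro y hy
  obtain ⟨m, n, heq⟩ := (mem_Ksub p a b).1 hy
  obtain ⟨heq1, heq2⟩ := Prod.mk.injEq .. ▸ heq
  -- first coordinate
  have h1 : m • (((p^c : ℕ) : ZMod (p^a))) = 0 := by
    have := congrArg Prod.fst heq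
    simpa using this
  have h2 : ((m * p^c : ℤ) : ZMod (p^a)) = 0 := by
    rw [← h1]; push_cast [zsmul_eq_mul]; ring
  have h3 : ((p^a : ℕ) : ℤ) ∣ m * p^c := (ZMod.intCast_zmod_eq_zero_iff_dvd _ _).1 h2
  have h4 : (p:ℤ)^(a-c) ∣ m := by
    have hpc : ((p:ℤ))^c ≠ 0 := pow_ne_zero _ (by exact_mod_cast (by omega : p ≠ 0))
    have : (p:ℤ)^(a-c) * (p:ℤ)^c ∣ m * (p:ℤ)^c := by
      rw [← pow_add]
      have : a - c + c = a := by omega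
      rw [this]
      exact_mod_cast h3
    exact (mul_dvd_mul_iff_right hpc).1 this
  obtain ⟨m', rfl⟩ := h4
  obtain ⟨s', rfl⟩ := hdvd
  -- second coordinate
  have h5 : y = ((p:ℤ)^(a-c) * m') • ((p^(d+c-a) * s' : ℕ) : ZMod (p^b))
      + n • (((p^d : ℕ)) : ZMod (p^b)) := by
    have := congrArg Prod.snd heq
    simpa using this.symm
  rw [mem_zmultiples_iff]
  refine ⟨(p:ℤ)^((a-c)+(d+c-a)-d) * m' * s' + n, ?_⟩
  have e1 : ∀ (m : ℤ) (t : ℕ), m • ((t : ZMod (p^b))) = ((m * t : ℤ) : ZMod (p^b)) := by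
    intro m t; push_cast [zsmul_eq_mul]; ring
  rw [h5, e1, e1, e1, ← Int.cast_add]
  refine congrArg _ ?_
  have hpow : (p:ℤ)^(a-c) * (p:ℤ)^(d+c-a) = (p:ℤ)^((a-c)+(d+c-a)-d) * (p:ℤ)^d := by
    rw [← pow_add, ← pow_add]; congr 1; omega
  push_cast
  linear_combination (-(m' * (s':ℤ))) * hpow

end

section
variable (p a b : ℕ)

lemma zmult_eq_of_card_entry {n : ℕ} (hp : 2 ≤ p) {k k' : ℕ} (hk : k ≤ n) (hk' : k' ≤ n)
    (h : zmultiples ((p^k : ℕ) : ZMod (p^n)) = zmultiples ((p^k' : ℕ) : ZMod (p^n))) :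
    k = k' := by
  have hcard : Nat.card (zmultiples ((p^k : ℕ) : ZMod (p^n)))
      = Nat.card (zmultiples ((p^k' : ℕ) : ZMod (p^n))) := by rw [h]
  rw [card_zmult p n k hp hk, card_zmult p n k' hp hk'] at hcard
  have := Nat.pow_right_injective hp hcard
  omega

lemma Ksub_inj (hp : 2 ≤ p) (hab : a ≤ b) {c d s c' d' s' : ℕ}
    (hc : c ≤ a) (hd : d ≤ b) (hs : s < p^d) (hdvd : p^(d+c-a) ∣ s)
    (hc' : c' ≤ a) (hd' : d' ≤ b) (hs' : s' < p^d') (hdvd' : p^(d'+c'-a) ∣ s')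
    (h : Ksub p a b c d s = Ksub p a b c' d' s') : c = c' ∧ d = d' ∧ s = s' := by
  -- c = c'
  have hcc : c = c' := by
    have h1 := congrArg (AddSubgroup.map (AddMonoidHom.fst (ZMod (p^a)) (ZMod (p^b)))) h
    rw [Ksub_map_fst, Ksub_map_fst] at h1
    exact zmult_eq_of_card_entry p hp hc hc' h1
  -- d = d'
  have hdd : d = d' := by
    have le1 : zmultiples ((p^d' : ℕ) : ZMod (p^b)) ≤ zmultiples ((p^d : ℕ) : ZMod (p^b)) := by
      rw [zmultiples_le]
      exact Ksub_snd_slice p a b hp hc hd hdvd _ (h ▸ gen2_mem_Ksub p a b c' d' s')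
    have le2 : zmultiples ((p^d : ℕ) : ZMod (p^b)) ≤ zmultiples ((p^d' : ℕ) : ZMod (p^b)) := by
      rw [zmultiples_le]
      exact Ksub_snd_slice p a b hp hc' hd' hdvd' _ (h ▸ gen2_mem_Ksub p a b c d s)
    exact zmult_eq_of_card_entry p hp hd hd' (le_antisymm le2 le1)
  subst hcc; subst hdd
  refine ⟨rfl, rfl, ?_⟩
  -- s = s'
  have hm1 : (((p^c : ℕ) : ZMod (p^a)), ((s : ℕ) : ZMod (p^b))) ∈ Ksub p a b c d s' :=
    h ▸ gen1_mem_Ksub p a b c d s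
  have hm2 : (((p^c : ℕ) : ZMod (p^a)), ((s' : ℕ) : ZMod (p^b))) ∈ Ksub p a b c d s' :=
    gen1_mem_Ksub p a b c d s'
  have hm3 : ((0 : ZMod (p^a)), ((s : ℕ) : ZMod (p^b)) - ((s' : ℕ) : ZMod (p^b)))
      ∈ Ksub p a b c d s' := by
    have := AddSubgroup.sub_mem _ hm1 hm2
    simpa using this
  have hz := Ksub_snd_slice p a b hp hc hd hdvd' _ hm3
  rw [mem_zmultiples_iff] at hz
  obtain ⟨k, hk⟩ := hz
  have : (((s : ℤ) - s' - k * p^d : ℤ) : ZMod (p^b)) = 0 := by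
    push_cast [zsmul_eq_mul] at hk ⊢
    linear_combination -hk
  rw [ZMod.intCast_zmod_eq_zero_iff_dvd] at this
  have hdb : ((p^d : ℕ) : ℤ) ∣ ((p^b : ℕ) : ℤ) := by
    exact_mod_cast Int.natCast_dvd_natCast.2 (pow_dvd_pow p hd)
  have hdvd2 : ((p^d : ℕ) : ℤ) ∣ (s : ℤ) - s' := by
    have h1 : ((p^d : ℕ) : ℤ) ∣ (s : ℤ) - s' - k * p^d := dvd_trans hdb this
    have h2 : ((p^d : ℕ) : ℤ) ∣ k * p^d := by
      push_cast
      exact dvd_mul_left _ _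
    have h3 : (s : ℤ) - s' = ((s : ℤ) - s' - k * p^d) + k * p^d := by ring
    rw [h3]
    exact dvd_add h1 (by push_cast; exact dvd_mul_left _ _)
  have := Int.eq_zero_of_abs_lt_dvd hdvd2 (by
    rw [abs_sub_lt_iff]
    constructor <;> omega)
  omega

end

end Aux

/-- Lemma 2: lower bound for `sd(G)` when `G` has a non-trivial
normal abelian subgroup `N ≅ Z_{p^α₁} × Z_{p^α₂}` of prime index. -/
theorem sd_lower_bound_abelian_normal (G : Type*) [Group G] [Finite G]
    (p α₁ α₂ : ℕ) (hp : p.Prime) (hα₁ : 1 ≤ α₁) (hα₁₂ : α₁ ≤ α₂)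
    (N : Subgroup G) [N.Normal] (hN : N ≠ ⊥)
    (hNiso : Nonempty (↥N ≃*
      Multiplicative (ZMod (p ^ α₁)) × Multiplicative (ZMod (p ^ α₂))))
    (hquot : (Nat.card (G ⧸ N)).Prime) :
    sd G ≥
      ((1 / ((p : ℝ) - 1) ^ 4) *
          (((α₂ : ℝ) - α₁ + 1) * (p : ℝ) ^ (α₁ + 2) -
            ((α₂ : ℝ) - α₁ - 1) * (p : ℝ) ^ (α₁ + 1) -
            ((α₁ : ℝ) + α₂ + 3) * p + ((α₁ : ℝ) + α₂ + 1)) ^ 2 + 4) /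
        (2 * (Nat.card (Subgroup G) : ℝ) ^ 2) := by
  classical
  obtain ⟨e⟩ := hNiso
  have hp2 : 2 ≤ p := hp.two_le
  have hpm : ((p : ℝ) - 1) ≠ 0 := by
    have : (2:ℝ) ≤ p := by exact_mod_cast hp2
    intro h; linarith
  set A := ZMod (p ^ α₁) × ZMod (p ^ α₂) with hA
  let eP := MulEquiv.prodMultiplicative (ZMod (p ^ α₁)) (ZMod (p ^ α₂))
  let f : Multiplicative A →* G :=
    N.subtype.comp ((e.symm.toMonoidHom).comp eP.toMonoidHom)
  have hfinj : Function.Injective f :=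
    N.subtype_injective.comp (e.symm.injective.comp eP.injective)
  let Φ : AddSubgroup A → Subgroup G := fun K => Subgroup.map f (AddSubgroup.toSubgroup K)
  have hΦinj : Function.Injective Φ := fun K K' h =>
    AddSubgroup.toSubgroup.injective (Subgroup.map_injective hfinj h)
  have hΦle : ∀ K, Φ K ≤ N := by
    rintro K x ⟨y, -, rfl⟩
    exact SetLike.coe_mem _
  have hcomm : ∀ x y : G, x ∈ N → y ∈ N → x * y = y * x := by
    intro x y hx hy
    have h2 : (⟨x, hx⟩ : ↥N) * ⟨y, hy⟩ = ⟨y, hy⟩ * ⟨x, hx⟩ :=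
      e.injective (by rw [map_mul, map_mul, mul_comm])
    exact Subtype.ext_iff.1 h2
  have hperm : ∀ X Y : Subgroup G, X ≤ N → Y ≤ N → Permutes X Y := by
    intro X Y hX hY
    unfold Permutes
    ext z
    simp only [Set.mem_mul]
    constructor
    · rintro ⟨x, hx, y, hy, rfl⟩
      exact ⟨y, hy, x, hx, (hcomm x y (hX hx) (hY hy)).symm⟩
    · rintro ⟨y, hy, x, hx, rfl⟩
      exact ⟨x, hx, y, hy, (hcomm x y (hX hx) (hY hy))⟩
  -- the index set
  set T := Tfin p α₁ α₂ with hT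
  have hmemT : ∀ t ∈ T, t.1.1 ≤ α₁ ∧ t.1.2 ≤ α₂ ∧ t.2 < p ^ t.1.2 ∧
      p ^ (t.1.2 + t.1.1 - α₁) ∣ t.2 := by
    intro t ht
    rw [hT, Tfin, Finset.mem_filter] at ht
    obtain ⟨hmem, h4, h5⟩ := ht
    rw [Finset.mem_product, Finset.mem_product] at hmem
    obtain ⟨⟨h1, h2⟩, h3⟩ := hmem
    rw [Finset.mem_range] at h1 h2
    exact ⟨by omega, by omega, h4, h5⟩
  let KT : ↥T → AddSubgroup A := fun t => Ksub p α₁ α₂ t.1.1.1 t.1.1.2 t.1.2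
  have hKTinj : Function.Injective KT := by
    intro t t' h
    have ht := hmemT _ t.2
    have ht' := hmemT _ t'.2
    have h3 := Ksub_inj p α₁ α₂ hp2 hα₁₂ ht.1 ht.2.1 ht.2.2.1 ht.2.2.2 ht'.1 ht'.2.1 ht'.2.2.1 ht'.2.2.2 h
    apply Subtype.ext
    exact Prod.ext (Prod.ext h3.1 h3.2.1) h3.2.2
  let Fm : (↥T × ↥T) → {q : Subgroup G × Subgroup G // Permutes q.1 q.2} :=
    fun t => ⟨(Φ (KT t.1), Φ (KT t.2)), hperm _ _ (hΦle _) (hΦle _)⟩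
  have hFminj : Function.Injective Fm := by
    intro u v h
    rw [Subtype.mk.injEq, Prod.mk.injEq] at h
    exact Prod.ext (hKTinj (hΦinj h.1)) (hKTinj (hΦinj h.2))
  have hcount : (T.card : ℝ) ^ 2 ≤
      (Nat.card {q : Subgroup G × Subgroup G // Permutes q.1 q.2} : ℝ) := by
    have h1 := Nat.card_le_card_of_injective Fm hFminj
    rw [Nat.card_prod, Nat.card_eq_finsetCard] at h1
    have : T.card * T.card ≤ Nat.card {q : Subgroup G × Subgroup G // Permutes q.1 q.2} := h1
    rw [sq]
    exact_mod_cast this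
  have hT2 : (2 : ℝ) ≤ (T.card : ℝ) := by
    have h2 : 1 < T.card := by
      have hppos : 0 < p := by omega
      refine Finset.one_lt_card.2 ⟨((0,0),0), ?_, ((0,α₂),0), ?_, ?_⟩
      · rw [hT, Tfin, Finset.mem_filter, Finset.mem_product, Finset.mem_product]
        exact ⟨⟨⟨Finset.mem_range.2 (by simp), Finset.mem_range.2 (by simp)⟩,
          Finset.mem_range.2 (pow_pos hppos _)⟩, by simp, dvd_zero _⟩
      · rw [hT, Tfin, Finset.mem_filter, Finset.mem_product, Finset.mem_product]
        exact ⟨⟨⟨Finset.mem_range.2 (by simp), Finset.mem_range.2 (by simp)⟩,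
          Finset.mem_range.2 (pow_pos hppos _)⟩, pow_pos hppos _, dvd_zero _⟩
      · simp only [ne_eq, Prod.mk.injEq, and_true, true_and]
        omega
    exact_mod_cast h2
  have hTcast : ((p:ℝ) - 1) ^ 2 * (T.card : ℝ) =
      ((α₂ : ℝ) - α₁ + 1) * (p : ℝ) ^ (α₁ + 2) -
        ((α₂ : ℝ) - α₁ - 1) * (p : ℝ) ^ (α₁ + 1) -
        ((α₁ : ℝ) + α₂ + 3) * p + ((α₁ : ℝ) + α₂ + 1) := by
    rw [hT, Tfin_card p α₁ α₂ hp2 hα₁₂]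
    have hre : ((∑ c ∈ Finset.range (α₁+1), ∑ d ∈ Finset.range (α₂+1),
        p ^ (min d (α₁ - c)) : ℕ) : ℝ)
        = ∑ c ∈ Finset.range (α₁+1), ∑ d ∈ Finset.range (α₂+1), (p:ℝ) ^ (min d (α₁ - c)) := by
      push_cast
      rfl
    rw [hre, ← main_identity p α₁ α₂ hp2 hα₁₂]
    congr 1
    rw [← Finset.sum_range_reflect
      (fun c => ∑ d ∈ Finset.range (α₂+1), (p:ℝ) ^ (min d c)) (α₁+1)]
    refine Finset.sum_congr rfl fun c hc => ?_
    have : α₁ + 1 - 1 - c = α₁ - c := by omega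
    rw [this]
  have hL0 : (0:ℝ) < (Nat.card (Subgroup G) : ℝ) := by
    have : 0 < Nat.card (Subgroup G) := Nat.card_pos
    exact_mod_cast this
  rw [ge_iff_le, sd, ← hTcast]
  have hsimp : 1 / ((p:ℝ) - 1) ^ 4 * (((p:ℝ) - 1) ^ 2 * (T.card : ℝ)) ^ 2
      = (T.card : ℝ) ^ 2 := by
    field_simp
  rw [hsimp, div_le_div_iff₀ (by positivity) (by positivity)]
  have key : (T.card : ℝ) ^ 2 + 4 ≤
      2 * (Nat.card {q : Subgroup G × Subgroup G // Permutes q.1 q.2} : ℝ) := by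
    nlinarith [hcount, hT2]
  calc ((T.card : ℝ) ^ 2 + 4) * (Nat.card (Subgroup G) : ℝ) ^ 2
      ≤ (2 * (Nat.card {q : Subgroup G × Subgroup G // Permutes q.1 q.2} : ℝ)) *
        (Nat.card (Subgroup G) : ℝ) ^ 2 :=
        mul_le_mul_of_nonneg_right key (by positivity)
    _ = (Nat.card {q : Subgroup G × Subgroup G // Permutes q.1 q.2} : ℝ) *
        (2 * (Nat.card (Subgroup G) : ℝ) ^ 2) := by ring
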